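/- Every irreducible stochastic matrix κ over a finite nonempty state space S has at least one invariant distribution. -/

import Mathlib

section aux

variable {S : Type*} [Fintype S] [DecidableEq S]

lemma pow_entry_nonneg (κ : Matrix S S ℝ) (h : ∀ z s, 0 ≤ κ z s) :
    ∀ n z s, 0 ≤ (κ ^ n) z s := by
  intro n
  induction n with
  | zero => intro z s; simp [Matrix.one_apply]; positivity
  | succ n ih =>
    intro z s
    rw [pow_succ, Matrix.mul_apply]
    exact Finset.sum_nonneg fun t _ => mul_nonneg (ih z t) (h t s)

lemma pow_rowsum (κ : Matrix S S ℝ) (h : ∀ z, ∑ s, κ z s = 1) :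
    ∀ n z, ∑ s, (κ ^ n) z s = 1 := by
  intro n
  induction n with
  | zero => intro z; simp [Matrix.one_apply]
  | succ n ih =>
    intro z
    simp only [pow_succ, Matrix.mul_apply]
    rw [Finset.sum_comm]
    have : ∀ t, ∑ s, (κ ^ n) z t * κ t s = (κ ^ n) z t := by
      intro t; rw [← Finset.mul_sum, h t, mul_one]
    simp_rw [this]
    exact ih z

end aux

/-- An irreducible stochastic matrix has at least one invariant distribution. -/
theorem irreducible_has_invariant_distribution
    {S : Type*} [Fintype S] [DecidableEq S] [Nonempty S]
    (κ : Matrix S S ℝ)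
    (hκ_nonneg : ∀ z s, 0 ≤ κ z s)
    (hκ_rowsum : ∀ z, ∑ s, κ z s = 1)
    (hirred : ∀ z s, ∃ n > 0, 0 < (κ ^ n) z s) :
    ∃ π : S → ℝ, (∀ s, 0 ≤ π s) ∧ (∑ s, π s = 1) ∧
      (∀ s, ∑ z, π z * κ z s = π s) := by
  classical
  obtain ⟨z₀⟩ := ‹Nonempty S›
  have hpnn := pow_entry_nonneg κ hκ_nonneg
  have hprs := pow_rowsum κ hκ_rowsum
  have hple1 : ∀ n z s, (κ ^ n) z s ≤ 1 := by
    intro n z s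
    calc (κ ^ n) z s ≤ ∑ t, (κ ^ n) z t :=
          Finset.single_le_sum (fun t _ => hpnn n z t) (Finset.mem_univ s)
      _ = 1 := hprs n z
  -- Cesàro averages
  set f : ℕ → S → ℝ := fun n s =>
    (1 / (n + 1 : ℝ)) * ∑ k ∈ Finset.range (n + 1), (κ ^ k) z₀ s with hf
  have hfmem : ∀ n, f n ∈ stdSimplex ℝ S := by
    intro n
    constructor
    · intro s
      exact mul_nonneg (by positivity)
        (Finset.sum_nonneg fun k _ => hpnn k z₀ s)
    · show ∑ s, (1 / (n + 1 : ℝ)) * ∑ k ∈ Finset.range (n + 1), (κ ^ k) z₀ s = 1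
      rw [← Finset.mul_sum, Finset.sum_comm]
      simp_rw [hprs]
      simp
      field_simp
  -- key identity
  have hkey : ∀ n s, ∑ z, f n z * κ z s
      = f n s + (1 / (n + 1 : ℝ)) * ((κ ^ (n + 1)) z₀ s - (κ ^ 0) z₀ s) := by
    intro n s
    have h1 : ∑ z, f n z * κ z s
        = (1 / (n + 1 : ℝ)) * ∑ k ∈ Finset.range (n + 1), (κ ^ (k + 1)) z₀ s := by
      calc ∑ z, f n z * κ z s
          = (1 / (n + 1 : ℝ)) * ∑ z, (∑ k ∈ Finset.range (n + 1), (κ ^ k) z₀ z) * κ z s := by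
            rw [Finset.mul_sum]
            exact Finset.sum_congr rfl fun z _ => by simp [hf, mul_assoc]
        _ = (1 / (n + 1 : ℝ)) * ∑ k ∈ Finset.range (n + 1), ∑ z, (κ ^ k) z₀ z * κ z s := by
            congr 1
            simp_rw [Finset.sum_mul]
            rw [Finset.sum_comm]
        _ = (1 / (n + 1 : ℝ)) * ∑ k ∈ Finset.range (n + 1), (κ ^ (k + 1)) z₀ s := by
            have hmm : ∀ k, ∑ z, (κ ^ k) z₀ z * κ z s = (κ ^ (k + 1)) z₀ s := fun k => by
              simp only [pow_succ, Matrix.mul_apply]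
            simp_rw [hmm]
    have h2 : ∑ k ∈ Finset.range (n + 1), (κ ^ (k + 1)) z₀ s
        = ∑ k ∈ Finset.range (n + 1), (κ ^ k) z₀ s + (κ ^ (n + 1)) z₀ s - (κ ^ 0) z₀ s := by
      have ha := Finset.sum_range_succ' (fun k => (κ ^ k) z₀ s) (n + 1)
      have hb := Finset.sum_range_succ (fun k => (κ ^ k) z₀ s) (n + 1)
      linarith
    rw [h1, h2, hf]
    ring
  -- extract a convergent subsequence
  obtain ⟨π, hπmem, φ, hφmono, hφt⟩ :=
    (isCompact_stdSimplex ℝ S).tendsto_subseq hfmem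
  refine ⟨π, hπmem.1, hπmem.2, fun s => ?_⟩
  have hc1 : Filter.Tendsto (fun n => f (φ n) s) Filter.atTop (nhds (π s)) :=
    tendsto_pi_nhds.mp hφt s
  have hc2 : Filter.Tendsto (fun n => ∑ z, f (φ n) z * κ z s) Filter.atTop
      (nhds (∑ z, π z * κ z s)) :=
    tendsto_finset_sum _ fun z _ => (tendsto_pi_nhds.mp hφt z).mul tendsto_const_nhds
  have hc3 : Filter.Tendsto
      (fun n => (1 / (φ n + 1 : ℝ)) * ((κ ^ (φ n + 1)) z₀ s - (κ ^ 0) z₀ s))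
      Filter.atTop (nhds 0) := by
    refine squeeze_zero_norm (a := fun n : ℕ => 1 / ((n : ℝ) + 1)) ?_
      tendsto_one_div_add_atTop_nhds_zero_nat
    intro n
    have hd : |(κ ^ (φ n + 1)) z₀ s - (κ ^ 0) z₀ s| ≤ 1 := by
      rw [abs_le]
      constructor
      · have := hpnn (φ n + 1) z₀ s; have := hple1 0 z₀ s; linarith
      · have := hple1 (φ n + 1) z₀ s; have := hpnn 0 z₀ s; linarith
    have hφn : (n : ℝ) ≤ (φ n : ℝ) := by exact_mod_cast hφmono.le_apply
    have h1 : (0:ℝ) < (n : ℝ) + 1 := by positivity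
    calc ‖(1 / (φ n + 1 : ℝ)) * ((κ ^ (φ n + 1)) z₀ s - (κ ^ 0) z₀ s)‖
        = (1 / (φ n + 1 : ℝ)) * |(κ ^ (φ n + 1)) z₀ s - (κ ^ 0) z₀ s| := by
          rw [Real.norm_eq_abs, abs_mul, abs_of_nonneg (by positivity)]
      _ ≤ (1 / (φ n + 1 : ℝ)) * 1 := by
          exact mul_le_mul_of_nonneg_left hd (by positivity)
      _ ≤ 1 / ((n : ℝ) + 1) := by
          rw [mul_one]
          exact one_div_le_one_div_of_le h1 (by linarith)
  have hc2' : Filter.Tendsto (fun n => ∑ z, f (φ n) z * κ z s) Filter.atTop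
      (nhds (π s + 0)) := by
    simp_rw [hkey]
    exact hc1.add hc3
  have := tendsto_nhds_unique hc2 hc2'
  simpa using this
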